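/- Identify ℝ² with ℂ via z = x + iy and let Ω = { z ∈ ℂ : |z| < 1, Re z > 0 } be the open right half-disk. For n ∈ ℕ define u_n : ℝ² → ℝ² by u_n(z) = (Re z)·zⁿ (complex multiplication, viewed as a map ℝ² → ℝ²). Then ∫_Ω |Grad u_n|² dx dy = π (n² + n + 1)/(2n + 2) and ∫_Ω |dev₂ sym Grad u_n|² dx dy = π/(4n + 4); in particular |dev₂ sym Grad u_n(z)|² = |z|^{2n}/2 pointwise. (Computations of Section 6.6.) -/

import Mathlib

open MeasureTheory Real Matrix Filter Complex

noncomputable section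

/-- Deviatoric (trace-free) part of a square matrix. -/
def dev {n : ℕ} (X : Matrix (Fin n) (Fin n) ℝ) : Matrix (Fin n) (Fin n) ℝ :=
  X - (Matrix.trace X / (n : ℝ)) • (1 : Matrix (Fin n) (Fin n) ℝ)

/-- Symmetric part of a square matrix. -/
def symP {n : ℕ} (X : Matrix (Fin n) (Fin n) ℝ) : Matrix (Fin n) (Fin n) ℝ :=
  (1 / 2 : ℝ) • (X + Xᵀ)

/-- Squared Frobenius norm. -/
def frobSq {n : ℕ} (X : Matrix (Fin n) (Fin n) ℝ) : ℝ := ∑ i, ∑ j, (X i j) ^ 2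

/-- The Jacobian of a map ℝ² → ℝ², where ℝ² is identified with ℂ via z = x + iy:
(Grad u)ᵢⱼ = ∂ⱼuᵢ. -/
def jacC (u : ℂ → ℂ) (z : ℂ) : Matrix (Fin 2) (Fin 2) ℝ :=
  !![(fderiv ℝ u z 1).re, (fderiv ℝ u z Complex.I).re;
     (fderiv ℝ u z 1).im, (fderiv ℝ u z Complex.I).im]

/-- The sequence u_n(z) = (Re z)·zⁿ, viewed as maps ℝ² → ℝ². -/
def un (n : ℕ) (z : ℂ) : ℂ := (z.re : ℂ) * z ^ n

/-- The open right half-disk Ω = { z : |z| < 1, Re z > 0 }. -/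
def halfDisk : Set ℂ := {z : ℂ | ‖z‖ < 1 ∧ 0 < z.re}

/-! ### Auxiliary lemmas -/

lemma fderiv_un_apply (n : ℕ) (z w : ℂ) :
    fderiv ℝ (un n) z w = (w.re : ℂ) * z ^ n + (z.re : ℂ) * (n * z ^ (n - 1)) * w := by
  have h1 : HasFDerivAt (fun z : ℂ => (z.re : ℂ))
      (Complex.ofRealCLM.comp Complex.reCLM) z :=
    (Complex.ofRealCLM.comp Complex.reCLM).hasFDerivAt
  have h2 : HasFDerivAt (fun z : ℂ => z ^ n)
      (((ContinuousLinearMap.smulRight (1 : ℂ →L[ℂ] ℂ) ((n : ℂ) * z ^ (n - 1)))).restrictScalars ℝ)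
      z := ((hasDerivAt_pow n z).hasFDerivAt).restrictScalars ℝ
  have h := (h1.mul h2).fderiv
  have hun : un n = fun y : ℂ => (y.re : ℂ) * y ^ n := rfl
  rw [hun, show (fun y : ℂ => (y.re : ℂ) * y ^ n) = ((fun z : ℂ => (z.re : ℂ)) * fun z => z ^ n) from rfl, h]
  simp
  ring

lemma sq_abs_pow (n : ℕ) (z : ℂ) :
    ‖z‖ ^ (2 * n) = ((z ^ n).re) ^ 2 + ((z ^ n).im) ^ 2 := by
  rw [two_mul, pow_add, ← sq, ← norm_pow, Complex.sq_norm, Complex.normSq_apply]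
  ring

lemma frob_dev (n : ℕ) (z : ℂ) :
    frobSq (dev (symP (jacC (un n) z))) = ‖z‖ ^ (2 * n) / 2 := by
  rw [sq_abs_pow]
  simp only [frobSq, dev, symP, jacC, fderiv_un_apply, Fin.sum_univ_two,
    Matrix.sub_apply, Matrix.smul_apply, Matrix.add_apply, Matrix.transpose_apply,
    Matrix.one_apply, Matrix.trace_fin_two, Matrix.cons_val', Matrix.cons_val_zero,
    Matrix.cons_val_one, Matrix.head_cons, Matrix.head_fin_const, Matrix.empty_val',
    Matrix.cons_val_fin_one, Matrix.of_apply]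
  simp [Complex.add_re, Complex.add_im, Complex.mul_re, Complex.mul_im]
  ring

lemma frob_jac (m : ℕ) (z : ℂ) :
    frobSq (jacC (un (m + 1)) z) =
      ((((m : ℝ) + 2) ^ 2 + ((m : ℝ) + 1) ^ 2) * z.re ^ 2 + z.im ^ 2) *
        ‖z‖ ^ (2 * m) := by
  rw [sq_abs_pow]
  simp only [frobSq, jacC, fderiv_un_apply, Fin.sum_univ_two,
    Matrix.cons_val', Matrix.cons_val_zero,
    Matrix.cons_val_one, Matrix.head_cons, Matrix.empty_val',
    Matrix.cons_val_fin_one, Matrix.of_apply, Matrix.vecHead, Matrix.vecTail,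
    Nat.add_sub_cancel, pow_succ]
  simp only [Complex.add_re, Complex.add_im, Complex.mul_re, Complex.mul_im,
    Complex.ofReal_re, Complex.ofReal_im, Complex.I_re, Complex.I_im,
    Complex.one_re, Complex.one_im, Complex.natCast_re, Complex.natCast_im]
  push_cast
  ring

lemma frob_jac_zero (z : ℂ) : frobSq (jacC (un 0) z) = 1 := by
  simp [frobSq, jacC, fderiv_un_apply, Fin.sum_univ_two]

lemma isOpen_halfDisk : IsOpen halfDisk :=
  (isOpen_lt continuous_norm continuous_const).inter
    (isOpen_lt continuous_const Complex.continuous_re)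

lemma cos_pos_iff_mem {θ : ℝ} (hθ : θ ∈ Set.Ioo (-π) π) :
    0 < Real.cos θ ↔ θ ∈ Set.Ioo (-(π/2)) (π/2) := by
  constructor
  · intro hc
    by_contra hmem
    simp only [Set.mem_Ioo, not_and_or, not_lt] at hmem
    rcases hmem with h1 | h2
    · have : Real.cos θ ≤ 0 := by
        rw [← Real.cos_neg]
        exact Real.cos_nonpos_of_pi_div_two_le_of_le (by linarith) (by
          have := hθ.1; linarith [Real.pi_pos])
      linarith
    · have : Real.cos θ ≤ 0 :=
        Real.cos_nonpos_of_pi_div_two_le_of_le h2 (by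
          have := hθ.2; linarith [Real.pi_pos])
      linarith
  · exact fun hm => Real.cos_pos_of_mem_Ioo hm

/-- Polar-coordinates computation of an integral over the right half-disk,
for integrands that separate in polar coordinates. -/
lemma halfDisk_integral (f : ℂ → ℝ) (g h : ℝ → ℝ)
    (hf : ∀ r θ : ℝ, 0 < r → r * f (Complex.polarCoord.symm (r, θ)) = g r * h θ) :
    ∫ z in halfDisk, f z =
      (∫ r in Set.Ioo (0:ℝ) 1, g r) * ∫ θ in Set.Ioo (-(π/2)) (π/2), h θ := by
  have hmemS : MeasurableSet (Set.Ioo (0:ℝ) 1 ×ˢ Set.Ioo (-(π/2)) (π/2)) :=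
    measurableSet_Ioo.prod measurableSet_Ioo
  have key : ∀ p ∈ Set.Ioi (0:ℝ) ×ˢ Set.Ioo (-π) π,
      p.1 • Set.indicator halfDisk f (Complex.polarCoord.symm p)
      = Set.indicator (Set.Ioo (0:ℝ) 1 ×ˢ Set.Ioo (-(π/2)) (π/2))
          (fun q : ℝ × ℝ => g q.1 * h q.2) p := by
    rintro ⟨r, θ⟩ ⟨hr, hθ⟩
    simp only [Set.mem_Ioi] at hr
    have hre : (Complex.polarCoord.symm (r, θ)).re = r * Real.cos θ := by
      simp [Complex.polarCoord_symm_apply, Complex.cos_ofReal_re]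
    have habs : ‖Complex.polarCoord.symm (r, θ)‖ = r := by
      rw [Complex.norm_polarCoord_symm]; exact abs_of_pos hr
    have hmem : Complex.polarCoord.symm (r, θ) ∈ halfDisk ↔
        (r, θ) ∈ Set.Ioo (0:ℝ) 1 ×ˢ Set.Ioo (-(π/2)) (π/2) := by
      simp only [halfDisk, Set.mem_setOf_eq, habs, hre, Set.mem_prod, Set.mem_Ioo]
      rw [mul_pos_iff_of_pos_left hr, cos_pos_iff_mem hθ]
      constructor
      · rintro ⟨h1, h2⟩; exact ⟨⟨hr, h1⟩, h2⟩
      · rintro ⟨⟨_, h1⟩, h2⟩; exact ⟨h1, h2⟩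
    by_cases hp : (r, θ) ∈ Set.Ioo (0:ℝ) 1 ×ˢ Set.Ioo (-(π/2)) (π/2)
    · rw [Set.indicator_of_mem hp, Set.indicator_of_mem (hmem.mpr hp)]
      exact hf r θ hr
    · rw [Set.indicator_of_notMem hp, Set.indicator_of_notMem (fun hc => hp (hmem.mp hc))]
      simp
  calc ∫ z in halfDisk, f z = ∫ z, Set.indicator halfDisk f z :=
        (integral_indicator isOpen_halfDisk.measurableSet).symm
    _ = ∫ p in Complex.polarCoord.target,
          p.1 • Set.indicator halfDisk f (Complex.polarCoord.symm p) :=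
        (Complex.integral_comp_polarCoord_symm _).symm
    _ = ∫ p in Set.Ioi (0:ℝ) ×ˢ Set.Ioo (-π) π,
          Set.indicator (Set.Ioo (0:ℝ) 1 ×ˢ Set.Ioo (-(π/2)) (π/2))
            (fun q : ℝ × ℝ => g q.1 * h q.2) p := by
        rw [Complex.polarCoord_target]
        exact setIntegral_congr_fun (measurableSet_Ioi.prod measurableSet_Ioo) key
    _ = ∫ p in Set.Ioo (0:ℝ) 1 ×ˢ Set.Ioo (-(π/2)) (π/2), g p.1 * h p.2 := by
        rw [setIntegral_indicator hmemS, Set.inter_eq_right.mpr]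
        rintro ⟨r, θ⟩ ⟨hr, hθ⟩
        have := Real.pi_pos
        exact ⟨hr.1, by constructor <;> [linarith [hθ.1]; linarith [hθ.2]]⟩
    _ = (∫ r in Set.Ioo (0:ℝ) 1, g r) * ∫ θ in Set.Ioo (-(π/2)) (π/2), h θ := by
        rw [← setIntegral_prod_mul]
        rfl

lemma int_pow_Ioo (k : ℕ) : ∫ r in Set.Ioo (0:ℝ) 1, r ^ k = 1 / ((k : ℝ) + 1) := by
  rw [← MeasureTheory.integral_Ioc_eq_integral_Ioo,
    ← intervalIntegral.integral_of_le (zero_le_one), integral_pow]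
  simp

lemma int_trig (C : ℝ) :
    ∫ θ in Set.Ioo (-(π/2)) (π/2), (C * Real.cos θ ^ 2 + Real.sin θ ^ 2) = (C + 1) * (π/2) := by
  have hab : -(π/2) ≤ π/2 := by have := Real.pi_pos; linarith
  rw [← MeasureTheory.integral_Ioc_eq_integral_Ioo,
    ← intervalIntegral.integral_of_le hab]
  have h1 : IntervalIntegrable (fun θ : ℝ => C * Real.cos θ ^ 2) volume (-(π/2)) (π/2) :=
    (Continuous.mul continuous_const (Real.continuous_cos.pow 2)).intervalIntegrable _ _
  have h2 : IntervalIntegrable (fun θ : ℝ => Real.sin θ ^ 2) volume (-(π/2)) (π/2) :=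
    ((Real.continuous_sin.pow 2)).intervalIntegrable _ _
  rw [intervalIntegral.integral_add h1 h2, intervalIntegral.integral_const_mul,
    integral_cos_sq, integral_sin_sq]
  simp [Real.cos_pi_div_two, Real.sin_pi_div_two]
  ring

lemma int_const_Ioo (c : ℝ) : ∫ _ in Set.Ioo (-(π/2)) (π/2), c = c * π := by
  simp only [setIntegral_const, smul_eq_mul]
  rw [Real.volume_real_Ioo_of_le (by linarith [Real.pi_pos]), show π/2 - -(π/2) = π by ring,
    mul_comm]

/-- Computations of Section 6.6: the Dirichlet energy of u_n over the right half-disk,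
the L² norm of the two-dimensional trace-free symmetric gradient, and its pointwise
value. -/
theorem halfDisk_un_computations (n : ℕ) :
    (∫ z in halfDisk, frobSq (jacC (un n) z)) =
        π * ((n : ℝ) ^ 2 + n + 1) / (2 * n + 2) ∧
    (∫ z in halfDisk, frobSq (dev (symP (jacC (un n) z)))) = π / (4 * n + 4) ∧
    ∀ z : ℂ, frobSq (dev (symP (jacC (un n) z))) = ‖z‖ ^ (2 * n) / 2 := by
  have habs : ∀ (r θ : ℝ), 0 < r →
      ‖Complex.polarCoord.symm (r, θ)‖ = r := fun r θ hr => by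
    rw [Complex.norm_polarCoord_symm]; exact abs_of_pos hr
  have hre : ∀ (r θ : ℝ), (Complex.polarCoord.symm (r, θ)).re = r * Real.cos θ := by
    intro r θ; simp [Complex.polarCoord_symm_apply, Complex.cos_ofReal_re]
  have him : ∀ (r θ : ℝ), (Complex.polarCoord.symm (r, θ)).im = r * Real.sin θ := by
    intro r θ; simp [Complex.polarCoord_symm_apply, Complex.sin_ofReal_re]
  refine ⟨?_, ?_, fun z => frob_dev n z⟩
  · -- Dirichlet energy
    cases n with
    | zero =>
      have : (∫ z in halfDisk, frobSq (jacC (un 0) z)) = ∫ z in halfDisk, (1:ℝ) := by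
        refine setIntegral_congr_fun isOpen_halfDisk.measurableSet fun z _ => frob_jac_zero z
      rw [this, halfDisk_integral (fun _ => (1:ℝ)) (fun r => r) (fun _ => (1:ℝ))
          (by intro r θ hr; simp), int_const_Ioo]
      have : ∫ r in Set.Ioo (0:ℝ) 1, r = 1/2 := by
        have := int_pow_Ioo 1
        norm_num at this
        simpa using this
      rw [this]
      norm_num
      ring
    | succ m =>
      set C : ℝ := ((m : ℝ) + 2) ^ 2 + ((m : ℝ) + 1) ^ 2 with hC
      have hcong : (∫ z in halfDisk, frobSq (jacC (un (m+1)) z)) =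
          ∫ z in halfDisk, (C * z.re ^ 2 + z.im ^ 2) * ‖z‖ ^ (2 * m) :=
        setIntegral_congr_fun isOpen_halfDisk.measurableSet fun z _ => frob_jac m z
      rw [hcong, halfDisk_integral _ (fun r => r ^ (2*m+3))
          (fun θ => C * Real.cos θ ^ 2 + Real.sin θ ^ 2) ?_, int_pow_Ioo, int_trig]
      · push_cast
        have h2 : (2:ℝ) * (m+1) + 2 > 0 := by positivity
        have h3 : ((2:ℝ) * m + 3) + 1 > 0 := by positivity
        field_simp
        ring
      · intro r θ hr
        rw [habs r θ hr, hre, him]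
        ring
  · -- trace-free part
    have hcong : (∫ z in halfDisk, frobSq (dev (symP (jacC (un n) z)))) =
        ∫ z in halfDisk, ‖z‖ ^ (2*n) / 2 :=
      setIntegral_congr_fun isOpen_halfDisk.measurableSet fun z _ => frob_dev n z
    rw [hcong, halfDisk_integral _ (fun r => r ^ (2*n+1)) (fun _ => (1/2 : ℝ))
        ?_, int_pow_Ioo, int_const_Ioo]
    · push_cast
      have h2 : (4:ℝ) * n + 4 > 0 := by positivity
      have h3 : ((2:ℝ) * n + 1) + 1 > 0 := by positivity
      field_simp
      ring
    · intro r θ hr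
      rw [habs r θ hr]
      ring
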